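/- Let 𝔦 be a homological ideal in a triangulated category with a phantom tower over A, and form the cellular approximation tower by exact triangles Ãₙ →^{αₙ} A →^{ιⁿ} Nₙ → Ãₙ[1], where ιⁿ = ι_{n-1}ⁿ ∘ ... ∘ ι₀¹ is the composite of n phantom maps, together with exact triangles Ãₙ → Ã_{n+1} → Pₙ → Ãₙ[1]. Then Ãₙ is 𝔦ⁿ-projective for each n ∈ ℕ. -/

import Mathlib

open CategoryTheory Limits Pretriangulated

universe v u

/-- An ideal in a preadditive category. -/
structure CatIdeal (C : Type u) [Category.{v} C] [Preadditive C] where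
  carrier : ∀ A B : C, AddSubgroup (A ⟶ B)
  comp_mem_left : ∀ {A B X : C} (f : A ⟶ B) (g : B ⟶ X),
    f ∈ carrier A B → f ≫ g ∈ carrier A X
  comp_mem_right : ∀ {A B X : C} (h : X ⟶ A) (f : A ⟶ B),
    f ∈ carrier A B → h ≫ f ∈ carrier X B

/-- The product of two classes of morphisms. -/
def idealProd {C : Type u} [Category.{v} C]
    (I₁ I₂ : ∀ A B : C, Set (A ⟶ B)) : ∀ A B : C, Set (A ⟶ B) :=
  fun A B => {f | ∃ (X : C) (f₂ : A ⟶ X) (f₁ : X ⟶ B),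
    f₂ ∈ I₂ A X ∧ f₁ ∈ I₁ X B ∧ f = f₂ ≫ f₁}

/-- Powers of an ideal. -/
def idealPow {C : Type u} [Category.{v} C]
    (I : ∀ A B : C, Set (A ⟶ B)) : ℕ → ∀ A B : C, Set (A ⟶ B)
  | 0 => fun _ _ => Set.univ
  | n + 1 => idealProd (idealPow I n) I

/-- `P` is `𝔦`-projective iff every morphism of `𝔦` out of `P` vanishes. -/
def IsProjI {C : Type u} [Category.{v} C] [Preadditive C]
    (I : CatIdeal C) (P : C) : Prop :=
  ∀ (B : C) (g : P ⟶ B), g ∈ I.carrier P B → g = 0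

/-- The composite `ιⁿ = ι_{n-1}ⁿ ∘ ⋯ ∘ ι₀¹ : N₀ ⟶ Nₙ` of phantom maps. -/
def iotaComp {C : Type u} [Category.{v} C]
    (N : ℕ → C) (ι : ∀ n, N n ⟶ N (n + 1)) : ∀ n, N 0 ⟶ N n
  | 0 => 𝟙 _
  | n + 1 => iotaComp N ι n ≫ ι n

/-- In the cellular approximation tower over `A = N 0` associated with a phantom
tower, each object `Ãₙ` is `𝔦ⁿ`-projective. -/
theorem cellular_approximation_tower_projective
    (C : Type u) [Category.{v} C] [Preadditive C] [HasZeroObject C] [HasShift C ℤ]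
    [∀ n : ℤ, (shiftFunctor C n).Additive] [Pretriangulated C]
    (I : CatIdeal C)
    (N P At : ℕ → C)
    (π : ∀ n, P n ⟶ N n)
    (ι : ∀ n, N n ⟶ N (n + 1))
    (ε : ∀ n, N (n + 1) ⟶ (P n)⟦(1 : ℤ)⟧)
    (htri : ∀ n, Triangle.mk (π n) (ι n) (ε n) ∈ (distTriang C))
    (hP : ∀ n, IsProjI I (P n))
    (hι : ∀ n, ι n ∈ I.carrier (N n) (N (n + 1)))
    (α : ∀ n, At n ⟶ N 0)
    (γ : ∀ n, N n ⟶ (At n)⟦(1 : ℤ)⟧)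
    (htriA : ∀ n, Triangle.mk (α n) (iotaComp N ι n) (γ n) ∈ (distTriang C))
    (β : ∀ n, At n ⟶ At (n + 1))
    (σ : ∀ n, At (n + 1) ⟶ P n)
    (κ : ∀ n, P n ⟶ (At n)⟦(1 : ℤ)⟧)
    (htriAP : ∀ n, Triangle.mk (β n) (σ n) (κ n) ∈ (distTriang C))
    (hA0 : IsZero (At 0)) :
    ∀ (n : ℕ) (B : C) (g : At n ⟶ B),
      g ∈ idealPow (fun X Y => (I.carrier X Y : Set (X ⟶ Y))) n (At n) B → g = 0 := by
    -- auxiliary facts proved inline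
  set J := (fun X Y => (I.carrier X Y : Set (X ⟶ Y))) with hJ
  have hpre : ∀ (n : ℕ) {X Y Z : C} (h : X ⟶ Y) (f : Y ⟶ Z),
      f ∈ idealPow J n Y Z → h ≫ f ∈ idealPow J n X Z := by
    intro n
    induction n with
    | zero => intro X Y Z h f _; trivial
    | succ n ih =>
      rintro X Y Z h f ⟨W, a, b, ha, hb, rfl⟩
      exact ⟨W, h ≫ a, b, I.comp_mem_right h a ha, hb, by simp⟩
  have hswap : ∀ (n : ℕ) {A B : C} (g : A ⟶ B), g ∈ idealPow J (n + 1) A B →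
      ∃ (X : C) (f₂ : A ⟶ X) (f₁ : X ⟶ B),
        f₂ ∈ idealPow J n A X ∧ f₁ ∈ I.carrier X B ∧ g = f₂ ≫ f₁ := by
    intro n
    induction n with
    | zero =>
      rintro A B g ⟨W, a, b, ha, -, rfl⟩
      exact ⟨A, 𝟙 A, a ≫ b, trivial, I.comp_mem_left a b ha, by simp⟩
    | succ n ih =>
      rintro A B g ⟨W, a, b, ha, hb, rfl⟩
      obtain ⟨X, c, d, hc, hd, rfl⟩ := ih b hb
      exact ⟨X, a ≫ c, d, ⟨W, a, c, ha, hc, rfl⟩, hd, by simp⟩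
  intro n
  induction n with
  | zero => intro B g _; exact hA0.eq_of_src g 0
  | succ n ih =>
    intro B g hg
    obtain ⟨X, f₂, f₁, hf₂, hf₁, rfl⟩ := hswap n g hg
    have h0 : β n ≫ f₂ = 0 := ih X (β n ≫ f₂) (hpre n (β n) f₂ hf₂)
    obtain ⟨h, rfl⟩ := Triangle.yoneda_exact₂ _ (htriAP n) f₂ h0
    have : h ≫ f₁ = 0 := hP n B (h ≫ f₁) (I.comp_mem_right h f₁ hf₁)
    exact (Category.assoc _ _ _).trans ((congrArg _ this).trans comp_zero)
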